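/- Let p ∈ (0, 2-√3), c > 0, and β = (1 + 5p² + √(1-14p²+p⁴))/2 (upper sign) or β = (1 + 5p² - √(1-14p²+p⁴))/2 (lower sign). Define A_n = c((1-p²)n - β)p^n, ω = (c²/12)·(1+p² ± √(1-14p²+p⁴))/(1-p²) and λ = (c²/6)·((3-4p²)/(1-p²) ± (3+4p²)√(1-14p²+p⁴)/(1-p²)²). Then Σ_{n=0}^∞ (n+1)·A_n² = (6/7)(λ + ω). -/

import Mathlib

lemma aux3 (n : ℕ) : (((n+3).choose 3 : ℕ) : ℝ) = (n+1)*(n+2)*(n+3)/6 := by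
  induction n with
  | zero => norm_num
  | succ k ih =>
    have e : (((k+1+3).choose 3 : ℕ) : ℝ) = (((k+3).choose 2 : ℕ) : ℝ) + (((k+3).choose 3 : ℕ) : ℝ) := by
      rw [show k+1+3 = (k+3)+1 from rfl, Nat.choose_succ_succ]
      push_cast; ring
    rw [e, ih, Nat.cast_choose_two]
    push_cast; ring

/-- For the pair of stationary states `A_n = c((1-p²)n - β)p^n` with the parameters
`β, ω, λ` given by the explicit formulas (either sign `s = ±1`),
`Q(A) = Σ (n+1) A_n² = (6/7)(λ + ω)`. -/
theorem stmt14 (p c s : ℝ) (hp0 : 0 < p) (hp1 : p < 2 - Real.sqrt 3) (hc : 0 < c)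
    (hs : s = 1 ∨ s = -1) :
    HasSum (fun n : ℕ => ((n : ℝ) + 1) *
        (c * ((1 - p ^ 2) * n -
          (1 + 5 * p ^ 2 + s * Real.sqrt (1 - 14 * p ^ 2 + p ^ 4)) / 2) * p ^ n) ^ 2)
      ((6 / 7) *
        (c ^ 2 / 6 * ((3 - 4 * p ^ 2) / (1 - p ^ 2) +
          s * (3 + 4 * p ^ 2) * Real.sqrt (1 - 14 * p ^ 2 + p ^ 4) / (1 - p ^ 2) ^ 2) +
         c ^ 2 / 12 * ((1 + p ^ 2 + s * Real.sqrt (1 - 14 * p ^ 2 + p ^ 4)) / (1 - p ^ 2)))) := by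
  have h3 : (Real.sqrt 3) ^ 2 = 3 := Real.sq_sqrt (by norm_num)
  have h3n : (0:ℝ) ≤ Real.sqrt 3 := Real.sqrt_nonneg 3
  have h31 : (1:ℝ) < Real.sqrt 3 := by nlinarith
  have hplt : p < 1 := by nlinarith
  have hx : |p ^ 2| < 1 := by
    rw [abs_of_nonneg (sq_nonneg p)]; nlinarith
  have hxr : ‖(p ^ 2 : ℝ)‖ < 1 := by rwa [Real.norm_eq_abs]
  have ha : (0:ℝ) < 1 - p ^ 2 := by nlinarith
  have h1 : p ^ 2 < 7 - 4 * Real.sqrt 3 := by nlinarith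
  have h2 : p ^ 2 < 7 + 4 * Real.sqrt 3 := by nlinarith
  have hdisc : 0 ≤ 1 - 14 * p ^ 2 + p ^ 4 := by
    nlinarith [mul_pos (sub_pos.2 h1) (sub_pos.2 h2)]
  set T := Real.sqrt (1 - 14 * p ^ 2 + p ^ 4) with hT
  have ht2 : T ^ 2 = 1 - 14 * p ^ 2 + p ^ 4 := Real.sq_sqrt hdisc
  set B : ℝ := (1 + 5 * p ^ 2 + s * T) / 2 with hB
  set a : ℝ := 1 - p ^ 2 with ha'
  have H3 := hasSum_choose_mul_geometric_of_norm_lt_one 3 hxr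
  have H2 := hasSum_choose_mul_geometric_of_norm_lt_one 2 hxr
  have H1 := hasSum_choose_mul_geometric_of_norm_lt_one 1 hxr
  have H := ((H3.mul_left (c^2*(6*a^2))).add (H2.mul_left (c^2*(-(10*a^2 + 4*a*B))))).add
      (H1.mul_left (c^2*(B+2*a)^2))
  convert H using 1
  · rfl
  · funext n
    have e3 := aux3 n
    have e2 : (((n+2).choose 2 : ℕ) : ℝ) = (n+1)*(n+2)/2 := by
      rw [Nat.cast_choose_two]; push_cast; ring
    have e1 : (((n+1).choose 1 : ℕ) : ℝ) = (n+1) := by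
      rw [Nat.choose_one_right]; push_cast; ring
    have hpn : ((p:ℝ) ^ 2) ^ n = (p ^ n) ^ 2 := by
      rw [← pow_mul, ← pow_mul, mul_comm]
    simp only [e3, e2, e1, hpn]
    ring
  · have hane : a ≠ 0 := ne_of_gt ha
    rcases hs with rfl | rfl
    · have hBsq : (B + 2*a)^2 = ((5+p^2)^2 + (1-14*p^2+p^4) + 2*(5+p^2)*T)/4 := by
        rw [hB, ha']; linear_combination (1/4) * ht2
      rw [hBsq, hB, ha']
      field_simp [show (1:ℝ) - p ^ 2 ≠ 0 from hane]
      ring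
    · have hBsq : (B + 2*a)^2 = ((5+p^2)^2 + (1-14*p^2+p^4) - 2*(5+p^2)*T)/4 := by
        rw [hB, ha']; linear_combination (1/4) * ht2
      rw [hBsq, hB, ha']
      field_simp [show (1:ℝ) - p ^ 2 ≠ 0 from hane]
      ring
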